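/- The naive top trading cycle dynamics on roommate assignments need not terminate: there is a 4-agent, 2-room instance with strict utilities and agents indifferent over rooms in which the sequence of assignments obtained by repeatedly resolving a top trading cycle returns to the initial assignment after 4 steps. -/

import Mathlib

/-- A roommate assignment: each agent has a roommate (`mate`) and a room (`room`);
roommates share a room and each room hosts exactly one pair. -/
structure Assignment (A R : Type*) where
  mate : A → A
  room : A → R
  mate_ne_self : ∀ i, mate i ≠ i
  mate_invol : ∀ i, mate (mate i) = i
  room_mate : ∀ i, room (mate i) = room i
  room_eq_iff : ∀ i j, room i = room j ↔ (j = i ∨ j = mate i)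

variable {A R : Type*}

/-- Utility of agent `i` in assignment `μ`: happiness for the roommate plus value of the room. -/
def util (h : A → A → ℝ) (v : A → R → ℝ) (μ : Assignment A R) (i : A) : ℝ :=
  h i (μ.mate i) + v i (μ.room i)

/-- `(i,j)` is a 2-person-stable blocking pair: they live in different rooms and both would
strictly gain by swapping places. -/
def blocking2PS (h : A → A → ℝ) (v : A → R → ℝ) (μ : Assignment A R) (i j : A) : Prop :=
  μ.room i ≠ μ.room j ∧
  h i (μ.mate j) + v i (μ.room j) > h i (μ.mate i) + v i (μ.room i) ∧
  h j (μ.mate i) + v j (μ.room i) > h j (μ.mate j) + v j (μ.room j)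

/-- `(i,j)` is a 4-person-stable blocking pair: in addition, both displaced roommates
strictly prefer their new roommate. -/
def blocking4PS (h : A → A → ℝ) (v : A → R → ℝ) (μ : Assignment A R) (i j : A) : Prop :=
  blocking2PS h v μ i j ∧
  h (μ.mate i) j > h (μ.mate i) i ∧
  h (μ.mate j) i > h (μ.mate j) j

def is2PS (h : A → A → ℝ) (v : A → R → ℝ) (μ : Assignment A R) : Prop :=
  ∀ i j, ¬ blocking2PS h v μ i j

def is4PS (h : A → A → ℝ) (v : A → R → ℝ) (μ : Assignment A R) : Prop :=
  ∀ i j, ¬ blocking4PS h v μ i j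

/-- `μ'` Pareto dominates `μ`. -/
def ParetoDom (h : A → A → ℝ) (v : A → R → ℝ) (μ' μ : Assignment A R) : Prop :=
  (∀ i, util h v μ i ≤ util h v μ' i) ∧ ∃ i, util h v μ i < util h v μ' i

def ParetoOpt (h : A → A → ℝ) (v : A → R → ℝ) (μ : Assignment A R) : Prop :=
  ∀ μ', ¬ ParetoDom h v μ' μ

/-- `μ'` is the result of swapping agents `i` and `j` in `μ`. -/
def IsSwap (μ μ' : Assignment A R) (i j : A) : Prop :=
  μ'.mate i = μ.mate j ∧ μ'.room i = μ.room j ∧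
  μ'.mate j = μ.mate i ∧ μ'.room j = μ.room i ∧
  μ'.room (μ.mate i) = μ.room i ∧ μ'.room (μ.mate j) = μ.room j ∧
  ∀ k, k ≠ i → k ≠ j → k ≠ μ.mate i → k ≠ μ.mate j →
    μ'.mate k = μ.mate k ∧ μ'.room k = μ.room k

/-- Social welfare: the sum of all agents' utilities. -/
noncomputable def SW [Fintype A] (h : A → A → ℝ) (v : A → R → ℝ) (μ : Assignment A R) : ℝ :=
  ∑ i, util h v μ i

/-- Utility agent `i` would get by swapping places with agent `s`. -/
def swapUtil (h : A → A → ℝ) (v : A → R → ℝ) (μ : Assignment A R) (i s : A) : ℝ :=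
  h i (μ.mate s) + v i (μ.room s)

/-- Arc of the naive top trading cycle graph: `i` points to `j` when swapping with `j`
strictly improves `i` and maximizes `i`'s utility among all swaps. -/
def naiveArc (h : A → A → ℝ) (v : A → R → ℝ) (μ : Assignment A R) (i j : A) : Prop :=
  j ≠ i ∧ j ≠ μ.mate i ∧
  swapUtil h v μ i j > util h v μ i ∧
  ∀ s, s ≠ i → s ≠ μ.mate i → swapUtil h v μ i s ≤ swapUtil h v μ i j

/-- Happiness values (agents a1..a4 = 0..3). -/
def hEx9 : Fin 4 → Fin 4 → ℝ := ![![0,3,6,10], ![10,0,3,6], ![6,10,0,3], ![3,6,10,0]]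

/-- All room values are 1. -/
def vEx9 : Fin 4 → Fin 2 → ℝ := fun _ _ => 1

/-- μ0 = {(a1,a2,r1),(a3,a4,r2)}. -/
def μ9₀ : Assignment (Fin 4) (Fin 2) :=
  ⟨![1,0,3,2], ![0,0,1,1], by decide, by decide, by decide, by decide⟩

/-- μ1 = {(a3,a2,r1),(a1,a4,r2)}. -/
def μ9₁ : Assignment (Fin 4) (Fin 2) :=
  ⟨![3,2,1,0], ![1,0,0,1], by decide, by decide, by decide, by decide⟩

/-- μ2 = {(a3,a4,r1),(a1,a2,r2)}. -/
def μ9₂ : Assignment (Fin 4) (Fin 2) :=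
  ⟨![1,0,3,2], ![1,1,0,0], by decide, by decide, by decide, by decide⟩

/-- μ3 = {(a1,a4,r1),(a2,a3,r2)}. -/
def μ9₃ : Assignment (Fin 4) (Fin 2) :=
  ⟨![3,2,1,0], ![0,1,1,0], by decide, by decide, by decide, by decide⟩

/-- Naive TTC need not terminate: starting from μ0, resolving the two-cycles
(a1,a3), (a2,a4), (a1,a3), (a2,a4) — each a genuine top trading cycle of the current
assignment — returns to the initial assignment after 4 steps. -/
theorem naive_ttc_cycles :
    (naiveArc hEx9 vEx9 μ9₀ 0 2 ∧ naiveArc hEx9 vEx9 μ9₀ 2 0 ∧ IsSwap μ9₀ μ9₁ 0 2) ∧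
    (naiveArc hEx9 vEx9 μ9₁ 1 3 ∧ naiveArc hEx9 vEx9 μ9₁ 3 1 ∧ IsSwap μ9₁ μ9₂ 1 3) ∧
    (naiveArc hEx9 vEx9 μ9₂ 0 2 ∧ naiveArc hEx9 vEx9 μ9₂ 2 0 ∧ IsSwap μ9₂ μ9₃ 0 2) ∧
    (naiveArc hEx9 vEx9 μ9₃ 1 3 ∧ naiveArc hEx9 vEx9 μ9₃ 3 1 ∧ IsSwap μ9₃ μ9₀ 1 3) := by
  refine ⟨⟨?_, ?_, by unfold IsSwap; decide⟩, ⟨?_, ?_, by unfold IsSwap; decide⟩, ⟨?_, ?_, by unfold IsSwap; decide⟩, ⟨?_, ?_, by unfold IsSwap; decide⟩⟩ <;>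
  · refine ⟨by decide, by decide, by norm_num [swapUtil, util, hEx9, vEx9, μ9₀, μ9₁, μ9₂, μ9₃, Matrix.cons_val_zero, Matrix.cons_val_one, Matrix.cons_val_two, Matrix.cons_val_three, Matrix.head_cons, Matrix.tail_cons], fun s hs hm => ?_⟩
    fin_cases s <;> simp_all <;> norm_num [swapUtil, util, hEx9, vEx9, μ9₀, μ9₁, μ9₂, μ9₃, Matrix.cons_val_zero, Matrix.cons_val_one, Matrix.cons_val_two, Matrix.cons_val_three, Matrix.head_cons, Matrix.tail_cons]
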